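/- arXiv:1902.02145 — 2 statements merged into one kernel-verified Lean document; each statement's English description precedes it below -/
import Mathlib

section
/- Let u₁,u₂,u₃,v₁,v₂,v₃ be nonzero real numbers. Then the characteristic polynomial of H² equals (X − 5)²(X − 1)⁴; in particular, the eigenvalues of H² are 5 with algebraic multiplicity 2 and 1 with algebraic multiplicity 4. -/
open Matrix Polynomial

/-- The 6×6 matrix H built from nonzero reals u₁,u₂,u₃,v₁,v₂,v₃. -/
noncomputable def Hmat (u1 u2 u3 v1 v2 v3 : ℝ) : Matrix (Fin 6) (Fin 6) ℝ :=
  !![1, u1/u2, u1/u3, u1/v1, 0, u1/v3;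
     0, 2, u2/u3, u2/v1, 0, u2/v3;
     0, u3/u2, 2, u3/v1, 0, u3/v3;
     0, -v1/u2, -v1/u3, -2, 0, -v1/v3;
     0, -v2/u2, -v2/u3, -v2/v1, -1, -v2/v3;
     0, -v3/u2, -v3/u3, -v3/v1, 0, -2]

@[simp] lemma my_cons_val_five {α : Type*} {m : ℕ} (x : α) (u : Fin (m + 5) → α) :
    Matrix.vecCons x u 5 = Matrix.vecHead (Matrix.vecTail (Matrix.vecTail
      (Matrix.vecTail (Matrix.vecTail u)))) := rfl

/-- The constant matrix to which H is similar. -/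
def Amat : Matrix (Fin 6) (Fin 6) ℝ :=
  !![1, 1, 1, 1, 0, 1;
     0, 2, 1, 1, 0, 1;
     0, 1, 2, 1, 0, 1;
     0, -1, -1, -2, 0, -1;
     0, -1, -1, -1, -1, -1;
     0, -1, -1, -1, 0, -2]

/-- Similar matrices have the same characteristic polynomial. -/
lemma charpoly_of_mul_eq_mul {n : ℕ} (P M N : Matrix (Fin n) (Fin n) ℝ)
    (h : N * P = P * M) (hP : P.det ≠ 0) : N.charpoly = M.charpoly := by
  have key : charmatrix N * P.map C = P.map C * charmatrix M := by
    simp only [charmatrix, sub_mul, mul_sub]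
    congr 1
    · exact (scalar_commute (X : ℝ[X]) (fun r => Commute.all _ _) (P.map C))
    · have := congrArg (fun (m : Matrix (Fin n) (Fin n) ℝ) => m.map (C : ℝ →+* ℝ[X])) h
      simpa [Matrix.map_mul, RingHom.mapMatrix_apply] using this
  have hdet := congrArg Matrix.det key
  rw [Matrix.det_mul, Matrix.det_mul] at hdet
  have hPC : (P.map (C : ℝ →+* ℝ[X])).det ≠ 0 := by
    rw [show P.map (C : ℝ →+* ℝ[X]) = (C : ℝ →+* ℝ[X]).mapMatrix P from rfl,
      ← RingHom.map_det]
    simpa using hP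
  unfold Matrix.charpoly
  exact mul_right_cancel₀ hPC (by rw [hdet, mul_comm])

set_option maxHeartbeats 1000000 in
theorem charpoly_Amat_sq : ((Amat) ^ 2).charpoly = (X - C 5) ^ 2 * (X - C 1) ^ 4 := by
  have hA2 : Amat ^ 2 =
      !![1, 2, 2, 0, 0, 0;
         0, 3, 2, 0, 0, 0;
         0, 2, 3, 0, 0, 0;
         0, 0, 0, 3, 0, 2;
         0, 0, 0, 2, 1, 2;
         0, 0, 0, 2, 0, 3] := by
    rw [pow_two, Amat]
    ext i j
    fin_cases i <;> fin_cases j <;>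
      simp [Matrix.mul_apply, Fin.sum_univ_six, Matrix.vecHead, Matrix.vecTail] <;> norm_num
  have hblock : (!![1, 2, 2, 0, 0, 0;
         0, 3, 2, 0, 0, 0;
         0, 2, 3, 0, 0, 0;
         0, 0, 0, 3, 0, 2;
         0, 0, 0, 2, 1, 2;
         0, 0, 0, 2, 0, 3] : Matrix (Fin 6) (Fin 6) ℝ) =
      Matrix.reindex finSumFinEquiv finSumFinEquiv
        (Matrix.fromBlocks (!![1, 2, 2; 0, 3, 2; 0, 2, 3]) 0 0
          (!![3, 0, 2; 2, 1, 2; 2, 0, 3])) := by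
    ext i j
    fin_cases i <;> fin_cases j <;> rfl
  have h1 : (!![1, 2, 2; 0, 3, 2; 0, 2, 3] : Matrix (Fin 3) (Fin 3) ℝ).charpoly =
      (X - C 5) * (X - C 1) ^ 2 := by
    rw [Matrix.charpoly, Matrix.det_fin_three]
    simp (config := { decide := true }) [charmatrix_apply, Matrix.diagonal_apply,
      Matrix.vecHead, Matrix.vecTail, map_ofNat, _root_.map_one]
    ring
  have h2 : (!![3, 0, 2; 2, 1, 2; 2, 0, 3] : Matrix (Fin 3) (Fin 3) ℝ).charpoly =
      (X - C 5) * (X - C 1) ^ 2 := by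
    rw [Matrix.charpoly, Matrix.det_fin_three]
    simp (config := { decide := true }) [charmatrix_apply, Matrix.diagonal_apply,
      Matrix.vecHead, Matrix.vecTail, map_ofNat, _root_.map_one]
    ring
  rw [hA2, hblock, Matrix.charpoly_reindex, Matrix.charpoly_fromBlocks_zero₁₂, h1, h2]
  ring

/-- The characteristic polynomial of H² is (X − 5)²(X − 1)⁴. -/
theorem charpoly_Hmat_sq (u1 u2 u3 v1 v2 v3 : ℝ) (hu1 : u1 ≠ 0) (hu2 : u2 ≠ 0)
    (hu3 : u3 ≠ 0) (hv1 : v1 ≠ 0) (hv2 : v2 ≠ 0) (hv3 : v3 ≠ 0) :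
    ((Hmat u1 u2 u3 v1 v2 v3) ^ 2).charpoly = (X - C 5) ^ 2 * (X - C 1) ^ 4 := by
  set D : Matrix (Fin 6) (Fin 6) ℝ := Matrix.diagonal ![u1, u2, u3, v1, v2, v3] with hDdef
  have hDdet : D.det ≠ 0 := by
    rw [hDdef, Matrix.det_diagonal, Fin.prod_univ_six]
    simp only [Matrix.cons_val_zero, Matrix.cons_val_one, Matrix.head_cons,
      Matrix.cons_val_two, Matrix.cons_val_three, Matrix.cons_val_four,
      my_cons_val_five, Matrix.vecHead, Matrix.vecTail]
    simp only [ne_eq, mul_eq_zero, not_or]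
    exact ⟨⟨⟨⟨⟨hu1, hu2⟩, hu3⟩, hv1⟩, hv2⟩, hv3⟩
  have hcomm : Hmat u1 u2 u3 v1 v2 v3 * D = D * Amat := by
    rw [hDdef]
    ext i j
    rw [Matrix.mul_diagonal, Matrix.diagonal_mul]
    fin_cases i <;> fin_cases j <;>
      simp [Hmat, Amat, Matrix.vecHead, Matrix.vecTail] <;>
      (try field_simp) <;> (try ring)
  have hcomm2 : (Hmat u1 u2 u3 v1 v2 v3) ^ 2 * D = D * Amat ^ 2 := by
    rw [pow_two, pow_two, mul_assoc, hcomm, ← mul_assoc, hcomm, mul_assoc]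
  rw [charpoly_of_mul_eq_mul D (Amat ^ 2) _ hcomm2 hDdet]
  exact charpoly_Amat_sq
end

section
/- Let u₁,u₂,u₃,v₁,v₂,v₃ be nonzero real numbers. The six vectors b₁ = (u₁/u₃, u₂/u₃, 1, 0, 0, 0), b₂ = (0, 0, 0, v₁/v₃, v₂/v₃, 1), b₃ = (0, 0, 0, −v₁/v₃, 0, 1), b₄ = (0, 0, 0, 0, 1, 0), b₅ = (0, −u₂/u₃, 1, 0, 0, 0), b₆ = (1, 0, 0, 0, 0, 0) form a basis of ℝ⁶ consisting of eigenvectors of H², with H²b₁ = 5b₁, H²b₂ = 5b₂, and H²bᵢ = bᵢ for i = 3,4,5,6. -/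
open Matrix

@[simp] lemma cons_val_five' {m : ℕ} {α : Type*} (x : α) (u : Fin (m+5) → α) :
    Matrix.vecCons x u 5 =
      Matrix.vecHead (Matrix.vecTail (Matrix.vecTail (Matrix.vecTail (Matrix.vecTail u)))) :=
  rfl


set_option maxRecDepth 16000 in
set_option maxHeartbeats 2000000 in
/-- The six stated vectors form a basis of ℝ⁶ consisting of eigenvectors of
H², with eigenvalue 5 for the first two and 1 for the other four. -/
theorem Hmat_sq_eigenbasis (u1 u2 u3 v1 v2 v3 : ℝ) (hu1 : u1 ≠ 0) (hu2 : u2 ≠ 0)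
    (hu3 : u3 ≠ 0) (hv1 : v1 ≠ 0) (hv2 : v2 ≠ 0) (hv3 : v3 ≠ 0) :
    letI b : Fin 6 → (Fin 6 → ℝ) :=
      ![![u1/u3, u2/u3, 1, 0, 0, 0],
        ![0, 0, 0, v1/v3, v2/v3, 1],
        ![0, 0, 0, -v1/v3, 0, 1],
        ![0, 0, 0, 0, 1, 0],
        ![0, -u2/u3, 1, 0, 0, 0],
        ![1, 0, 0, 0, 0, 0]]
    LinearIndependent ℝ b ∧ Submodule.span ℝ (Set.range b) = ⊤ ∧
    ((Hmat u1 u2 u3 v1 v2 v3) ^ 2).mulVec (b 0) = (5 : ℝ) • b 0 ∧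
    ((Hmat u1 u2 u3 v1 v2 v3) ^ 2).mulVec (b 1) = (5 : ℝ) • b 1 ∧
    ((Hmat u1 u2 u3 v1 v2 v3) ^ 2).mulVec (b 2) = b 2 ∧
    ((Hmat u1 u2 u3 v1 v2 v3) ^ 2).mulVec (b 3) = b 3 ∧
    ((Hmat u1 u2 u3 v1 v2 v3) ^ 2).mulVec (b 4) = b 4 ∧
    ((Hmat u1 u2 u3 v1 v2 v3) ^ 2).mulVec (b 5) = b 5 := by
  have hli : LinearIndependent ℝ
      (fun i => (!![u1/u3, u2/u3, 1, 0, 0, 0;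
        0, 0, 0, v1/v3, v2/v3, 1;
        0, 0, 0, -v1/v3, 0, 1;
        0, 0, 0, 0, 1, 0;
        0, -u2/u3, 1, 0, 0, 0;
        1, 0, 0, 0, 0, 0] : Matrix (Fin 6) (Fin 6) ℝ) i) := by
    refine linearIndependent_rows_iff_isUnit.mpr ?_
    refine (Matrix.isUnit_iff_isUnit_det _).mpr <| Matrix.isUnit_det_of_right_inverse (B := 
      (!![0, 0, 0, 0, 0, 1;
          u3/(2*u2), 0, 0, 0, -(u3/(2*u2)), -(u1/(2*u2));
          1/2, 0, 0, 0, 1/2, -(u1/(2*u3));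
          0, v3/(2*v1), -(v3/(2*v1)), -(v2/(2*v1)), 0, 0;
          0, 0, 0, 1, 0, 0;
          0, 1/2, 1/2, -(v2/(2*v3)), 0, 0] : Matrix (Fin 6) (Fin 6) ℝ)) ?_
    ext i j
    fin_cases i <;> fin_cases j <;>
      · simp [Matrix.mul_apply, Fin.sum_univ_succ]
        try field_simp
        try ring
  refine ⟨hli, hli.span_eq_top_of_card_eq_finrank (by simp), ?_, ?_, ?_, ?_, ?_, ?_⟩ <;>
  · rw [pow_two, ← Matrix.mulVec_mulVec]
    funext i
    fin_cases i <;>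
    · simp [Hmat, Matrix.mulVec, dotProduct, Fin.sum_univ_succ,
        Matrix.vecHead, Matrix.vecTail]
      try field_simp
      try simp [Matrix.vecHead, Matrix.vecTail]
      try ring
      try simp
end
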